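/- Let G be the banded graph of bandwidth b on [n] with edges {(i,j): |i-j| ≤ b}, H ∈ S_n(G) with every principal submatrix H_{JJ} for J = {j, j+1, ..., min(j+b,n)} positive definite. For each j set I_j = {j+1,...,j+b} ∩ [n], define L unit lower triangular banded with L_{I_j,j} = -H_{I_jI_j}⁻¹ H_{I_j,j}, and D diagonal with D_{jj}⁻¹ = H_{jj} - H_{I_j,j}ᵀ H_{I_jI_j}⁻¹ H_{I_j,j}. Then X = L D Lᵀ is the minimizer over S_n(G)^{++} of -log det(X) + Tr(XH), and in particular P_G(X⁻¹) = H. -/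

import Mathlib

open Matrix

/-- The index set I_j = {j+1, ..., j+b} ∩ [n] as a subtype of `Fin n`. -/
def bandIdx (n b : ℕ) (j : Fin n) : Type :=
  {k : Fin n // (j : ℕ) < (k : ℕ) ∧ (k : ℕ) ≤ (j : ℕ) + b}

instance (n b : ℕ) (j : Fin n) : Fintype (bandIdx n b j) :=
  Subtype.fintype _

instance (n b : ℕ) (j : Fin n) : DecidableEq (bandIdx n b j) :=
  Subtype.instDecidableEq

/-- The principal submatrix H_{I_j I_j}. -/
def subH {n : ℕ} (b : ℕ) (H : Matrix (Fin n) (Fin n) ℝ) (j : Fin n) :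
    Matrix (bandIdx n b j) (bandIdx n b j) ℝ :=
  H.submatrix (fun k => k.1) (fun k => k.1)

/-- The subvector H_{I_j, j}. -/
def subv {n : ℕ} (b : ℕ) (H : Matrix (Fin n) (Fin n) ℝ) (j : Fin n) :
    bandIdx n b j → ℝ :=
  fun k => H k.1 j


lemma sum_eq_sum_comp_of_support {l m : Type*} [Fintype l] [Fintype m] [DecidableEq l]
    (e : m → l) (he : Function.Injective e) (f : l → ℝ)
    (hf : ∀ i, (∀ k, e k ≠ i) → f i = 0) :
    ∑ i, f i = ∑ k, f (e k) := by
  have h1 : ∑ k, f (e k) = ∑ i ∈ Finset.univ.image e, f i :=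
    (Finset.sum_image (fun x _ y _ h => he h)).symm
  rw [h1]
  refine (Finset.sum_subset (Finset.subset_univ _) ?_).symm
  intro i _ hi
  refine hf i fun k hk => hi ?_
  rw [← hk]; exact Finset.mem_image_of_mem e (Finset.mem_univ k)

lemma sum_eq_sum_subtype {N : ℕ} (P : Fin N → Prop) [DecidablePred P] (f : Fin N → ℝ)
    (hf : ∀ i, ¬ P i → f i = 0) :
    ∑ i, f i = ∑ k : {k : Fin N // P k}, f k.1 :=
  sum_eq_sum_comp_of_support (fun k : {k : Fin N // P k} => k.1) Subtype.val_injective f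
    (fun i hi => hf i (fun hPi => hi ⟨i, hPi⟩ rfl))

lemma trace_eq_sum_eigenvalues' {N : Type*} [Fintype N] [DecidableEq N]
    {A : Matrix N N ℝ} (hA : A.IsHermitian) : A.trace = ∑ i, hA.eigenvalues i := by
  conv_lhs => rw [hA.spectral_theorem]
  rw [Unitary.conjStarAlgAut_apply, Matrix.trace_mul_comm, ← Matrix.mul_assoc]
  rw [show (star (hA.eigenvectorUnitary : Matrix N N ℝ)) * (hA.eigenvectorUnitary : Matrix N N ℝ) = 1 from Unitary.coe_star_mul_self _]
  rw [Matrix.one_mul, Matrix.trace_diagonal]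
  simp

lemma posDef_submatrix_of_injective {m l : Type*} [Fintype m] [Fintype l]
    {M : Matrix l l ℝ} (hM : M.PosDef) (e : m → l) (he : Function.Injective e) :
    (M.submatrix e e).PosDef := by
  classical
  refine Matrix.PosDef.of_dotProduct_mulVec_pos ?_ ?_
  · ext i j
    have h := congrFun (congrFun hM.1 (e i)) (e j)
    simpa [Matrix.conjTranspose_apply, Matrix.submatrix_apply] using h
  · intro x hx
    set y : l → ℝ := fun i => if h : ∃ k, e k = i then x h.choose else 0 with hy
    have hye : ∀ k, y (e k) = x k := by
      intro k
      have h : ∃ k', e k' = e k := ⟨k, rfl⟩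
      simp only [hy, dif_pos h]
      exact congrArg x (he h.choose_spec)
    have hy0 : ∀ i, (∀ k, e k ≠ i) → y i = 0 := by
      intro i hi; simp only [hy]; rw [dif_neg]; rintro ⟨k, hk⟩; exact hi k hk
    have hyne : y ≠ 0 := by
      obtain ⟨k, hk⟩ := Function.ne_iff.mp hx
      intro h0
      exact hk (by have := congrFun h0 (e k); rwa [hye k] at this)
    have hq := hM.dotProduct_mulVec_pos hyne
    have hinner : ∀ k : m, (M *ᵥ y) (e k) = ((M.submatrix e e) *ᵥ x) k := by
      intro k
      show ∑ j, M (e k) j * y j = ∑ j, M.submatrix e e k j * x j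
      rw [sum_eq_sum_comp_of_support e he (fun j => M (e k) j * y j)
        (fun i hi => by show M (e k) i * y i = 0; rw [hy0 i hi, mul_zero])]
      exact Finset.sum_congr rfl fun j _ => by rw [Matrix.submatrix_apply, hye]
    have key : star y ⬝ᵥ (M *ᵥ y) = star x ⬝ᵥ ((M.submatrix e e) *ᵥ x) := by
      show ∑ i, star (y i) * (M *ᵥ y) i = ∑ k, star (x k) * ((M.submatrix e e) *ᵥ x) k
      rw [sum_eq_sum_comp_of_support e he (fun i => star (y i) * (M *ᵥ y) i)
        (fun i hi => by show star (y i) * (M *ᵥ y) i = 0; rw [hy0 i hi]; simp)]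
      exact Finset.sum_congr rfl fun k _ => by rw [hye, hinner]
    rwa [key] at hq

section Struct

variable {n b : ℕ} (H : Matrix (Fin n) (Fin n) ℝ)

/-- Schur complement scalar. -/
noncomputable def schurd (b : ℕ) (H : Matrix (Fin n) (Fin n) ℝ) (j : Fin n) : ℝ :=
  H j j - subv b H j ⬝ᵥ ((subH b H j)⁻¹ *ᵥ subv b H j)

variable (L : Matrix (Fin n) (Fin n) ℝ)
variable (hL : ∀ i j : Fin n, L i j =
      if i = j then 1
      else if h : (j : ℕ) < (i : ℕ) ∧ (i : ℕ) ≤ (j : ℕ) + b then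
        (-((subH b H j)⁻¹ *ᵥ subv b H j)) ⟨i, h⟩
      else 0)

include hL

lemma L_diag (j : Fin n) : L j j = 1 := by rw [hL]; simp

lemma L_upper {i j : Fin n} (h : (i : ℕ) < (j : ℕ)) : L i j = 0 := by
  rw [hL, if_neg (by exact fun he => absurd (congrArg Fin.val he) (Nat.ne_of_lt h)),
    dif_neg (by rintro ⟨h1, -⟩; omega)]

lemma L_lowband {i j : Fin n} (h : (j : ℕ) + b < (i : ℕ)) : L i j = 0 := by
  rw [hL, if_neg (by rintro rfl; omega), dif_neg (by rintro ⟨-, h2⟩; omega)]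

lemma L_band_apply (j : Fin n) (k : bandIdx n b j) :
    L k.1 j = (-((subH b H j)⁻¹ *ᵥ subv b H j)) k := by
  rw [hL, if_neg (fun he => absurd (congrArg Fin.val he) (by have := k.2.1; omega)),
    dif_pos k.2]
  rfl

/-- Splitting a sum against the `j`-th column of `L`. -/
lemma sum_L_col (j : Fin n) (w : Fin n → ℝ) :
    ∑ k, L k j * w k = w j + ∑ k : bandIdx n b j, L k.1 j * w k.1 := by
  have hterm : ∀ k : Fin n, L k j * w k =
      (if k = j then w j else 0) +
      (if h : (j : ℕ) < (k : ℕ) ∧ (k : ℕ) ≤ (j : ℕ) + b then L k j * w k else 0) := by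
    intro k
    by_cases hkj : k = j
    · subst hkj
      rw [L_diag H L hL, if_pos rfl, dif_neg (by omega), one_mul, add_zero]
    · rw [if_neg hkj]
      by_cases hb : (j : ℕ) < (k : ℕ) ∧ (k : ℕ) ≤ (j : ℕ) + b
      · rw [dif_pos hb, zero_add]
      · rw [dif_neg hb, add_zero]
        rcases Nat.lt_or_ge (k : ℕ) (j : ℕ) with h | h
        · rw [L_upper H L hL h, zero_mul]
        · have hj : (j : ℕ) + b < (k : ℕ) := by
            rcases Nat.lt_or_ge ((j : ℕ) + b) (k : ℕ) with h' | h'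
            · exact h'
            · exact absurd ⟨lt_of_le_of_ne h (fun he => hkj (Fin.ext he.symm)), h'⟩ hb
          rw [L_lowband H L hL hj, zero_mul]
  rw [Finset.sum_congr rfl (fun k _ => hterm k), Finset.sum_add_distrib,
    Finset.sum_ite_eq' Finset.univ j (fun _ => w j), if_pos (Finset.mem_univ j)]
  congr 1
  rw [sum_eq_sum_subtype (fun k => (j : ℕ) < (k : ℕ) ∧ (k : ℕ) ≤ (j : ℕ) + b)
    _ (fun i hi => dif_neg hi)]
  exact Finset.sum_congr rfl fun k _ => by rw [dif_pos k.2]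

lemma mulL_entry (i j : Fin n) :
    (H * L) i j = H i j - ∑ k : bandIdx n b j,
      ((subH b H j)⁻¹ *ᵥ subv b H j) k * H i k.1 := by
  rw [Matrix.mul_apply]
  have : ∀ k : Fin n, H i k * L k j = L k j * H i k := fun k => mul_comm _ _
  rw [Finset.sum_congr rfl (fun k _ => this k), sum_L_col H L hL j (fun k => H i k)]
  rw [Finset.sum_congr rfl (fun (k : bandIdx n b j) _ => by
    rw [L_band_apply H L hL j k, Pi.neg_apply, neg_mul])]
  rw [Finset.sum_neg_distrib]
  ring

variable (hPD : ∀ j : Fin n,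
      (H.submatrix
        (fun k : {k : Fin n // (j : ℕ) ≤ (k : ℕ) ∧ (k : ℕ) ≤ (j : ℕ) + b} => k.1)
        (fun k => k.1)).PosDef)

include hPD

omit hL in
lemma subH_posDef (j : Fin n) : (subH b H j).PosDef := by
  have h := posDef_submatrix_of_injective (hPD j)
    (fun k : bandIdx n b j => (⟨k.1, ⟨le_of_lt k.2.1, k.2.2⟩⟩ :
      {k : Fin n // (j : ℕ) ≤ (k : ℕ) ∧ (k : ℕ) ≤ (j : ℕ) + b}))
    (fun k l hkl => Subtype.ext (by
      have := congrArg Subtype.val hkl; exact this))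
  exact h

omit hL in
lemma subH_isUnit_det (j : Fin n) : IsUnit (subH b H j).det :=
  (subH_posDef H hPD j).det_pos.ne'.isUnit

lemma mulL_zero {i j : Fin n} (h1 : (j : ℕ) < (i : ℕ)) (h2 : (i : ℕ) ≤ (j : ℕ) + b) :
    (H * L) i j = 0 := by
  rw [mulL_entry H L hL i j]
  have hv : ∀ k : bandIdx n b j,
      ((subH b H j)⁻¹ *ᵥ subv b H j) k * H i k.1
        = subH b H j ⟨i, h1, h2⟩ k * ((subH b H j)⁻¹ *ᵥ subv b H j) k :=
    fun k => mul_comm _ _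
  rw [Finset.sum_congr rfl (fun k _ => hv k)]
  have : ∑ k : bandIdx n b j, subH b H j ⟨i, h1, h2⟩ k * ((subH b H j)⁻¹ *ᵥ subv b H j) k
      = (subH b H j *ᵥ ((subH b H j)⁻¹ *ᵥ subv b H j)) ⟨i, h1, h2⟩ := rfl
  rw [this, Matrix.mulVec_mulVec, Matrix.mul_nonsing_inv _ (subH_isUnit_det H hPD j),
    Matrix.one_mulVec]
  show H i j - subv b H j ⟨i, h1, h2⟩ = 0
  show H i j - H i j = 0
  ring

variable (hsym : H.IsSymm)
include hsym

omit hPD in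
lemma mulL_diag (j : Fin n) : (H * L) j j = schurd b H j := by
  rw [mulL_entry H L hL j j]
  unfold schurd
  congr 1
  show ∑ k : bandIdx n b j, ((subH b H j)⁻¹ *ᵥ subv b H j) k * H j k.1
    = ∑ k : bandIdx n b j, subv b H j k * ((subH b H j)⁻¹ *ᵥ subv b H j) k
  exact Finset.sum_congr rfl fun k _ => by
    rw [hsym.apply, mul_comm]; rfl

lemma schurd_pos (j : Fin n) : 0 < schurd b H j := by
  have hjb : (j : ℕ) ≤ (j : ℕ) ∧ (j : ℕ) ≤ (j : ℕ) + b := ⟨le_rfl, Nat.le_add_right _ _⟩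
  set J := {k : Fin n // (j : ℕ) ≤ (k : ℕ) ∧ (k : ℕ) ≤ (j : ℕ) + b}
  set x : J → ℝ := fun p => L p.1 j with hx
  have hx0 : x ≠ 0 := by
    intro h0
    have := congrFun h0 ⟨j, hjb⟩
    rw [hx] at this
    simp only [L_diag H L hL] at this
    exact one_ne_zero this
  have hq := (hPD j).dotProduct_mulVec_pos hx0
  have hinner : ∀ p : J,
      ((H.submatrix (fun k : J => k.1) (fun k => k.1)) *ᵥ x) p = (H * L) p.1 j := by
    intro p
    show ∑ q : J, H p.1 q.1 * L q.1 j = ∑ q, H p.1 q * L q j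
    rw [sum_eq_sum_subtype (fun k => (j : ℕ) ≤ (k : ℕ) ∧ (k : ℕ) ≤ (j : ℕ) + b)
      (fun q => H p.1 q * L q j) ?_]
    intro q hq'
    show H p.1 q * L q j = 0
    rcases Nat.lt_or_ge (q : ℕ) (j : ℕ) with h | h
    · rw [L_upper H L hL h, mul_zero]
    · have h2 : (j : ℕ) + b < (q : ℕ) := by
        rcases Nat.lt_or_ge ((j:ℕ)+b) (q:ℕ) with h' | h'
        · exact h'
        · exact absurd ⟨h, h'⟩ hq'
      rw [L_lowband H L hL h2, mul_zero]
  have hform : star x ⬝ᵥ ((H.submatrix (fun k : J => k.1) (fun k => k.1)) *ᵥ x)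
      = schurd b H j := by
    show ∑ p : J, star (x p) * ((H.submatrix (fun k : J => k.1) (fun k => k.1)) *ᵥ x) p = _
    have hterm : ∀ p : J, star (x p) * ((H.submatrix (fun k : J => k.1) (fun k => k.1)) *ᵥ x) p
        = if p = (⟨j, hjb⟩ : J) then schurd b H j else 0 := by
      intro p
      rw [hinner p]
      by_cases hp : p = (⟨j, hjb⟩ : J)
      · subst hp
        rw [if_pos rfl]
        show star (L j j) * (H * L) j j = _
        rw [L_diag H L hL, mulL_diag H L hL hsym j]
        simp
      · rw [if_neg hp]
        have hlt : (j : ℕ) < (p.1 : ℕ) :=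
          lt_of_le_of_ne p.2.1 (fun he => hp (Subtype.ext (Fin.ext he.symm)))
        rw [mulL_zero H L hL hPD hlt p.2.2, mul_zero]
    rw [Finset.sum_congr rfl (fun p _ => hterm p),
      Finset.sum_ite_eq' Finset.univ (⟨j, hjb⟩ : J) (fun _ => schurd b H j),
      if_pos (Finset.mem_univ _)]
  rwa [hform] at hq

end Struct

set_option maxHeartbeats 1000000 in
theorem banded_logdet_explicit_solution {n b : ℕ}
    (H : Matrix (Fin n) (Fin n) ℝ) (hsym : H.IsSymm)
    (hsp : ∀ i j : Fin n, ((i : ℕ) + b < (j : ℕ) ∨ (j : ℕ) + b < (i : ℕ)) → H i j = 0)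
    (hPD : ∀ j : Fin n,
      (H.submatrix
        (fun k : {k : Fin n // (j : ℕ) ≤ (k : ℕ) ∧ (k : ℕ) ≤ (j : ℕ) + b} => k.1)
        (fun k => k.1)).PosDef)
    (L Dm X : Matrix (Fin n) (Fin n) ℝ)
    (hL : ∀ i j : Fin n, L i j =
      if i = j then 1
      else if h : (j : ℕ) < (i : ℕ) ∧ (i : ℕ) ≤ (j : ℕ) + b then
        (-((subH b H j)⁻¹ *ᵥ subv b H j)) ⟨i, h⟩
      else 0)
    (hD : Dm = Matrix.diagonal (fun j : Fin n =>
      (H j j - subv b H j ⬝ᵥ ((subH b H j)⁻¹ *ᵥ subv b H j))⁻¹))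
    (hX : X = L * Dm * Lᵀ) :
    X.PosDef ∧
    (∀ i j : Fin n, ((i : ℕ) + b < (j : ℕ) ∨ (j : ℕ) + b < (i : ℕ)) → X i j = 0) ∧
    (∀ i j : Fin n, ¬ ((i : ℕ) + b < (j : ℕ) ∨ (j : ℕ) + b < (i : ℕ)) → X⁻¹ i j = H i j) ∧
    (∀ Y : Matrix (Fin n) (Fin n) ℝ, Y.PosDef →
      (∀ i j : Fin n, ((i : ℕ) + b < (j : ℕ) ∨ (j : ℕ) + b < (i : ℕ)) → Y i j = 0) →
      -Real.log X.det + (X * H).trace ≤ -Real.log Y.det + (Y * H).trace) := by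
  classical
  have hD' : Dm = Matrix.diagonal (fun j => (schurd b H j)⁻¹) := hD
  have hdetL : L.det = 1 := by
    have htri : L.BlockTriangular OrderDual.toDual := by
      intro i j hij
      exact L_upper H L hL (by exact_mod_cast hij)
    rw [Matrix.det_of_lowerTriangular L htri]
    exact Finset.prod_eq_one (fun j _ => L_diag H L hL j)
  have hdetLu : IsUnit L.det := by rw [hdetL]; exact isUnit_one
  have hdetLT : IsUnit Lᵀ.det := by rw [Matrix.det_transpose, hdetL]; exact isUnit_one
  have hd : ∀ j, 0 < schurd b H j := fun j => schurd_pos H L hL hPD hsym j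
  have hDmpd : Dm.PosDef := by
    rw [hD']; exact Matrix.PosDef.diagonal (fun j => inv_pos.mpr (hd j))
  have hDminv : Dm⁻¹ = Matrix.diagonal (fun j => schurd b H j) := by
    rw [hD']
    apply Matrix.inv_eq_right_inv
    rw [Matrix.diagonal_mul_diagonal,
      show (fun j => (schurd b H j)⁻¹ * schurd b H j) = fun _ => (1:ℝ) from
        funext fun j => inv_mul_cancel₀ (hd j).ne', Matrix.diagonal_one]
  have hXsymm : Xᵀ = X := by
    rw [hX, hD', Matrix.transpose_mul, Matrix.transpose_mul, Matrix.transpose_transpose,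
      Matrix.diagonal_transpose, ← Matrix.mul_assoc]
  have hLTH : (Lᵀ)ᴴ = L := by
    ext i j; simp [Matrix.conjTranspose_apply]
  have hXpd : X.PosDef := by
    refine Matrix.PosDef.of_dotProduct_mulVec_pos ?_ ?_
    · show Xᴴ = X
      ext i j
      simp only [Matrix.conjTranspose_apply, star_trivial]
      exact congrFun (congrFun hXsymm i) j
    · intro x hx
      have hz : Lᵀ *ᵥ x ≠ 0 := by
        intro h0
        have hinj : Function.Injective (Lᵀ).mulVec :=
          (Matrix.mulVec_injective_iff_isUnit).mpr ((Matrix.isUnit_iff_isUnit_det _).mpr hdetLT)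
        exact hx (hinj (by rw [h0, Matrix.mulVec_zero]))
      have hpos := hDmpd.dotProduct_mulVec_pos hz
      have heq : star x ⬝ᵥ (X *ᵥ x) = star (Lᵀ *ᵥ x) ⬝ᵥ (Dm *ᵥ (Lᵀ *ᵥ x)) := by
        rw [hX, ← Matrix.mulVec_mulVec, ← Matrix.mulVec_mulVec,
          Matrix.dotProduct_mulVec, Matrix.star_mulVec, hLTH]
      rw [heq]
      exact hpos
  have hXdet : IsUnit X.det := hXpd.det_pos.ne'.isUnit
  have hXX : X * X⁻¹ = 1 := Matrix.mul_nonsing_inv _ hXdet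
  have hLN : L * L⁻¹ = 1 := Matrix.mul_nonsing_inv _ hdetLu
  have hNtri : ∀ i q : Fin n, (i : ℕ) ≤ (q : ℕ) →
      L⁻¹ i q = (1 : Matrix (Fin n) (Fin n) ℝ) i q := by
    have key : ∀ m : ℕ, ∀ i q : Fin n, (i : ℕ) ≤ m → (i : ℕ) ≤ (q : ℕ) →
        L⁻¹ i q = (1 : Matrix (Fin n) (Fin n) ℝ) i q := by
      intro m
      induction m using Nat.strong_induction_on with
      | _ m ih =>
        intro i q him hiq
        have h1 : (L * L⁻¹) i q = (1 : Matrix (Fin n) (Fin n) ℝ) i q := by rw [hLN]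
        rw [Matrix.mul_apply] at h1
        have hsplit : ∀ k : Fin n, L i k * L⁻¹ k q = if k = i then L⁻¹ i q else 0 := by
          intro k
          by_cases hk : k = i
          · subst hk; rw [if_pos rfl, L_diag H L hL, one_mul]
          · rw [if_neg hk]
            rcases Nat.lt_trichotomy (k : ℕ) (i : ℕ) with h | h | h
            · have hkq : (k : ℕ) ≤ (q : ℕ) := le_trans (le_of_lt h) hiq
              rw [ih (k : ℕ) (lt_of_lt_of_le h him) k q le_rfl hkq,
                Matrix.one_apply_ne (by intro he; rw [he] at h; omega), mul_zero]
            · exact absurd (Fin.ext h) hk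
            · rw [L_upper H L hL h, zero_mul]
        rw [Finset.sum_congr rfl (fun k _ => hsplit k),
          Finset.sum_ite_eq' Finset.univ i (fun _ => L⁻¹ i q),
          if_pos (Finset.mem_univ i)] at h1
        exact h1
    exact fun i q hiq => key (i : ℕ) i q le_rfl hiq
  have hXinv : X⁻¹ = (Lᵀ)⁻¹ * (Dm⁻¹ * L⁻¹) := by
    rw [hX, Matrix.mul_inv_rev, Matrix.mul_inv_rev]
  have hLtX : Lᵀ * X⁻¹ = Dm⁻¹ * L⁻¹ := by
    rw [hXinv, ← Matrix.mul_assoc, Matrix.mul_nonsing_inv _ hdetLT, Matrix.one_mul]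
  have hM : ∀ i q : Fin n, (i : ℕ) ≤ (q : ℕ) →
      (Lᵀ * X⁻¹) i q = if i = q then schurd b H i else 0 := by
    intro i q hiq
    rw [hLtX, hDminv, Matrix.diagonal_mul, hNtri i q hiq]
    by_cases h : i = q <;> simp [Matrix.one_apply, h]
  have hLtH : ∀ i q : Fin n, (i : ℕ) ≤ (q : ℕ) → (q : ℕ) ≤ (i : ℕ) + b →
      (Lᵀ * H) i q = if i = q then schurd b H i else 0 := by
    intro i q h1 h2
    have hHL : (Lᵀ * H) i q = (H * L) q i := by
      rw [Matrix.mul_apply, Matrix.mul_apply]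
      exact Finset.sum_congr rfl fun k _ => by
        rw [Matrix.transpose_apply, hsym.apply q k]; ring
    rcases eq_or_ne i q with he | hne
    · subst he
      rw [hHL, mulL_diag H L hL hsym i, if_pos rfl]
    · have h1' : (i : ℕ) < (q : ℕ) := lt_of_le_of_ne h1 (fun he => hne (Fin.ext he))
      rw [hHL, mulL_zero H L hL hPD h1' h2, if_neg hne]
  have hEsub : ∀ i q : Fin n, (i : ℕ) ≤ (q : ℕ) → (q : ℕ) ≤ (i : ℕ) + b →
      (X⁻¹ - H) i q + ∑ k : bandIdx n b i, L k.1 i * (X⁻¹ - H) k.1 q = 0 := by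
    intro i q h1 h2
    have hz : (Lᵀ * (X⁻¹ - H)) i q = 0 := by
      rw [Matrix.mul_sub, Matrix.sub_apply, hM i q h1, hLtH i q h1 h2, sub_self]
    rw [Matrix.mul_apply] at hz
    have hb' : ∀ k, Lᵀ i k * (X⁻¹ - H) k q = L k i * (X⁻¹ - H) k q := fun k => rfl
    rw [Finset.sum_congr rfl (fun k _ => hb' k),
      sum_L_col H L hL i (fun k => (X⁻¹ - H) k q)] at hz
    exact hz
  have hXinvsymm : ∀ i q : Fin n, X⁻¹ q i = X⁻¹ i q := by
    intro i q
    conv_lhs => rw [← hXsymm]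
    rw [← Matrix.transpose_nonsing_inv, Matrix.transpose_apply]
  have hEsymm : ∀ i q : Fin n, (X⁻¹ - H) q i = (X⁻¹ - H) i q := by
    intro i q
    rw [Matrix.sub_apply, Matrix.sub_apply, hXinvsymm i q, hsym.apply i q]
  have hEband : ∀ m : ℕ, ∀ i q : Fin n,
      2 * (n - (i : ℕ)) + (if i = q then 1 else 0) ≤ m →
      (i : ℕ) ≤ (q : ℕ) → (q : ℕ) ≤ (i : ℕ) + b → (X⁻¹ - H) i q = 0 := by
    intro m
    induction m using Nat.strong_induction_on with
    | _ m ih =>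
      intro i q hm h1 h2
      have hm0 : 2 * (n - (i : ℕ)) ≤ m := le_trans (Nat.le_add_right _ _) hm
      have hz := hEsub i q h1 h2
      have hsum : ∑ k : bandIdx n b i, L k.1 i * (X⁻¹ - H) k.1 q = 0 := by
        apply Finset.sum_eq_zero
        intro k _
        have hki : (i : ℕ) < (k.1 : ℕ) := k.2.1
        have hkb : (k.1 : ℕ) ≤ (i : ℕ) + b := k.2.2
        have hkn : (k.1 : ℕ) < n := k.1.isLt
        rcases le_or_gt (k.1 : ℕ) (q : ℕ) with hkq | hqk
        · have hlt : 2 * (n - (k.1 : ℕ)) + (if k.1 = q then 1 else 0) < m := by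
            have : 2 * (n - (k.1 : ℕ)) + (if k.1 = q then 1 else 0)
                < 2 * (n - (i : ℕ)) := by split <;> omega
            omega
          rw [ih _ hlt k.1 q le_rfl hkq (by omega), mul_zero]
        · have hqk' : q ≠ k.1 := fun he => absurd (congrArg Fin.val he) (by omega)
          have hlt : 2 * (n - (q : ℕ)) + (if q = k.1 then 1 else 0) < m := by
            rw [if_neg hqk']
            by_cases hiq : i = q
            · rw [if_pos hiq] at hm
              have := congrArg Fin.val hiq
              omega
            · rw [if_neg hiq] at hm
              have h1' : (i : ℕ) < (q : ℕ) := lt_of_le_of_ne h1 (fun he => hiq (Fin.ext he))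
              have := q.isLt
              omega
          rw [hEsymm q k.1, ih _ hlt q k.1 le_rfl (le_of_lt hqk) (by omega), mul_zero]
      rw [hsum, add_zero] at hz
      exact hz
  have hitem3 : ∀ i j : Fin n, ¬ ((i : ℕ) + b < (j : ℕ) ∨ (j : ℕ) + b < (i : ℕ)) →
      X⁻¹ i j = H i j := by
    intro i j hband
    push_neg at hband
    obtain ⟨hb1, hb2⟩ := hband
    rcases le_or_gt (i : ℕ) (j : ℕ) with h | h
    · have hE := hEband (2 * (n - (i : ℕ)) + (if i = j then 1 else 0)) i j le_rfl h (by omega)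
      rw [Matrix.sub_apply] at hE
      linarith
    · have hE := hEband (2 * (n - (j : ℕ)) + (if j = i then 1 else 0)) j i le_rfl
        (le_of_lt h) (by omega)
      rw [Matrix.sub_apply] at hE
      rw [hXinvsymm j i, hsym.apply j i]
      linarith
  have hitem2 : ∀ i j : Fin n, ((i : ℕ) + b < (j : ℕ) ∨ (j : ℕ) + b < (i : ℕ)) →
      X i j = 0 := by
    intro i j hband
    rw [hX, Matrix.mul_apply]
    apply Finset.sum_eq_zero
    intro l _
    rw [hD', Matrix.mul_diagonal, Matrix.transpose_apply]
    rcases hband with h | h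
    · rcases le_or_gt (l : ℕ) (i : ℕ) with hl | hl
      · rw [L_lowband H L hL (by omega : (l : ℕ) + b < (j : ℕ)), mul_zero]
      · rw [L_upper H L hL hl, zero_mul, zero_mul]
    · rcases le_or_gt (l : ℕ) (j : ℕ) with hl | hl
      · rw [L_lowband H L hL (by omega : (l : ℕ) + b < (i : ℕ)), zero_mul, zero_mul]
      · rw [L_upper H L hL hl, mul_zero]
  have htrYH : ∀ Y : Matrix (Fin n) (Fin n) ℝ,
      (∀ i j : Fin n, ((i : ℕ) + b < (j : ℕ) ∨ (j : ℕ) + b < (i : ℕ)) → Y i j = 0) →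
      (Y * H).trace = (Y * X⁻¹).trace := by
    intro Y hY
    unfold Matrix.trace
    apply Finset.sum_congr rfl
    intro i _
    show (Y * H) i i = (Y * X⁻¹) i i
    rw [Matrix.mul_apply, Matrix.mul_apply]
    apply Finset.sum_congr rfl
    intro k _
    by_cases hb' : ((i : ℕ) + b < (k : ℕ) ∨ (k : ℕ) + b < (i : ℕ))
    · rw [hY i k hb', zero_mul, zero_mul]
    · rw [hitem3 k i (fun hc => hb' (hc.elim Or.inr Or.inl))]
  have htrXH : (X * H).trace = (n : ℝ) := by
    rw [htrYH X hitem2, hXX, Matrix.trace_one]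
    simp
  refine ⟨hXpd, hitem2, hitem3, ?_⟩
  intro Y hYpd hYband
  have hXipd : (X⁻¹).PosDef := hXpd.inv
  obtain ⟨C, hCC, hCherm⟩ : ∃ C : Matrix (Fin n) (Fin n) ℝ, C * C = X⁻¹ ∧ Cᴴ = C := by
    open scoped MatrixOrder in
    exact ⟨CFC.sqrt X⁻¹, CFC.sqrt_mul_sqrt_self _ hXipd.posSemidef.nonneg,
      (CFC.sqrt_nonneg _).posSemidef.1⟩
  have hNpsd : (C * Y * C).PosSemidef := by
    have h := (hYpd.posSemidef).mul_mul_conjTranspose_same C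
    rwa [hCherm] at h
  set μ := hNpsd.1.eigenvalues with hμ
  have hdetN : (C * Y * C).det = Y.det * X.det⁻¹ := by
    rw [Matrix.det_mul, Matrix.det_mul]
    have h2 : C.det * C.det = X⁻¹.det := by rw [← Matrix.det_mul, hCC]
    have h3 : X⁻¹.det = X.det⁻¹ := by
      rw [Matrix.det_nonsing_inv, Ring.inverse_eq_inv]
    calc C.det * Y.det * C.det = (C.det * C.det) * Y.det := by ring
      _ = Y.det * X.det⁻¹ := by rw [h2, h3]; ring
  have hdetNprod : (C * Y * C).det = ∏ i, μ i := by
    simpa using hNpsd.1.det_eq_prod_eigenvalues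
  have hdetNpos : 0 < (C * Y * C).det := by
    rw [hdetN]
    exact mul_pos hYpd.det_pos (inv_pos.mpr hXpd.det_pos)
  have hμpos : ∀ i, 0 < μ i := by
    intro i
    rcases lt_or_eq_of_le (hNpsd.eigenvalues_nonneg i) with h | h
    · exact h
    · exfalso
      rw [hdetNprod, Finset.prod_eq_zero (Finset.mem_univ i) h.symm] at hdetNpos
      exact lt_irrefl 0 hdetNpos
  have htrN : (C * Y * C).trace = ∑ i, μ i := trace_eq_sum_eigenvalues' hNpsd.1
  have htrN2 : (C * Y * C).trace = (Y * X⁻¹).trace := by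
    calc (C * Y * C).trace = (C * (C * Y)).trace := Matrix.trace_mul_comm _ _
      _ = (C * C * Y).trace := by rw [Matrix.mul_assoc]
      _ = (X⁻¹ * Y).trace := by rw [hCC]
      _ = (Y * X⁻¹).trace := Matrix.trace_mul_comm _ _
  have hlogdetN : Real.log (C * Y * C).det = Real.log Y.det - Real.log X.det := by
    rw [hdetN, Real.log_mul hYpd.det_pos.ne' (inv_ne_zero hXpd.det_pos.ne'), Real.log_inv]
    ring
  have hlogdetN2 : Real.log (C * Y * C).det = ∑ i, Real.log (μ i) := by
    rw [hdetNprod, Real.log_prod (fun i _ => (hμpos i).ne')]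
  have hineq : (n : ℝ) ≤ (C * Y * C).trace - Real.log (C * Y * C).det := by
    rw [htrN, hlogdetN2, ← Finset.sum_sub_distrib]
    calc (n : ℝ) = ∑ _i : Fin n, (1 : ℝ) := by simp
      _ ≤ ∑ i, (μ i - Real.log (μ i)) := Finset.sum_le_sum (fun i _ => by
          have := Real.log_le_sub_one_of_pos (hμpos i); linarith)
  have htrYH' : (Y * H).trace = (C * Y * C).trace := by rw [htrYH Y hYband, ← htrN2]
  rw [htrXH, htrYH']
  linarith [hineq, hlogdetN]
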